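/- Every set of positive N×M matrices with independent row uncertainty (IRU-set) is an H-set. -/

import Mathlib

open scoped Matrix


/-- A vector is positive if all its coordinates are strictly positive. -/
def PosVec {M : ℕ} (x : Fin M → ℝ) : Prop := ∀ j, 0 < x j

/-- A matrix is positive if all its entries are strictly positive. -/
def PosMat {N M : ℕ} (A : Matrix (Fin N) (Fin M) ℝ) : Prop := ∀ i j, 0 < A i j

/-- The hourglass alternative: a set of matrices is an H-set if for every
matrix `At` in the set and every positive vector `x`, assertions H1 and H2 hold. -/
def IsHSet {N M : ℕ} (𝒜 : Set (Matrix (Fin N) (Fin M) ℝ)) : Prop :=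
  ∀ At ∈ 𝒜, ∀ x : Fin M → ℝ, PosVec x →
    ((∀ A ∈ 𝒜, At.mulVec x ≤ A.mulVec x) ∨
      ∃ Ab ∈ 𝒜, Ab.mulVec x ≤ At.mulVec x ∧ Ab.mulVec x ≠ At.mulVec x) ∧
    ((∀ A ∈ 𝒜, A.mulVec x ≤ At.mulVec x) ∨
      ∃ Ab ∈ 𝒜, At.mulVec x ≤ Ab.mulVec x ∧ Ab.mulVec x ≠ At.mulVec x)

lemma update_mulVec {N M : ℕ} (At : Matrix (Fin N) (Fin M) ℝ) (i : Fin N)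
    (r : Fin M → ℝ) (x : Fin M → ℝ) (k : Fin N) :
    Matrix.mulVec (Function.update At i r) x k = if k = i then r ⬝ᵥ x else At.mulVec x k := by
  rcases eq_or_ne k i with rfl | hk
  · simp [Matrix.mulVec]
    exact congrArg (· ⬝ᵥ x) (Function.update_self k r (At : Fin N → Fin M → ℝ))
  · simp [Matrix.mulVec, Function.update_of_ne hk, hk]
    exact congrArg (· ⬝ᵥ x) (Function.update_of_ne hk r (At : Fin N → Fin M → ℝ))

/-- Every positive IRU-set (set of matrices with independent row uncertainty)
is an H-set. -/
theorem iru_isHSet {N M : ℕ} (R : Fin N → Set (Fin M → ℝ))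
    (hpos : ∀ i, ∀ r ∈ R i, ∀ j, 0 < r j)
    (𝒜 : Set (Matrix (Fin N) (Fin M) ℝ))
    (h𝒜 : ∀ A, A ∈ 𝒜 ↔ ∀ i, A i ∈ R i) :
    IsHSet 𝒜 := by
  intro At hAt x hx
  constructor
  · by_cases h : ∀ A ∈ 𝒜, At.mulVec x ≤ A.mulVec x
    · exact Or.inl h
    · right
      push_neg at h
      obtain ⟨A, hA, hle⟩ := h
      rw [Pi.le_def] at hle; push_neg at hle
      obtain ⟨i, hi⟩ := hle
      refine ⟨Function.update At i (A i), ?_, ?_, ?_⟩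
      · refine (h𝒜 _).mpr ?_; intro k
        rcases eq_or_ne k i with rfl | hk
        · convert (h𝒜 A).mp hA k using 1
          exact Function.update_self k (A k) (At : Fin N → Fin M → ℝ)
        · convert (h𝒜 At).mp hAt k using 1
          exact Function.update_of_ne hk (A i) (At : Fin N → Fin M → ℝ)
      · intro k
        rw [update_mulVec]
        rcases eq_or_ne k i with rfl | hk
        · simpa [Matrix.mulVec] using hi.le
        · simp [hk]
      · intro heq
        have := congrFun heq i
        rw [update_mulVec] at this
        simp [Matrix.mulVec] at this
        rw [show A i ⬝ᵥ x = Matrix.mulVec A x i from rfl] at this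
        exact absurd this (ne_of_lt hi)
  · by_cases h : ∀ A ∈ 𝒜, A.mulVec x ≤ At.mulVec x
    · exact Or.inl h
    · right
      push_neg at h
      obtain ⟨A, hA, hle⟩ := h
      rw [Pi.le_def] at hle; push_neg at hle
      obtain ⟨i, hi⟩ := hle
      refine ⟨Function.update At i (A i), ?_, ?_, ?_⟩
      · refine (h𝒜 _).mpr ?_; intro k
        rcases eq_or_ne k i with rfl | hk
        · convert (h𝒜 A).mp hA k using 1
          exact Function.update_self k (A k) (At : Fin N → Fin M → ℝ)
        · convert (h𝒜 At).mp hAt k using 1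
          exact Function.update_of_ne hk (A i) (At : Fin N → Fin M → ℝ)
      · intro k
        rw [update_mulVec]
        rcases eq_or_ne k i with rfl | hk
        · simpa [Matrix.mulVec] using hi.le
        · simp [hk]
      · intro heq
        have := congrFun heq i
        rw [update_mulVec] at this
        simp [Matrix.mulVec] at this
        rw [show A i ⬝ᵥ x = Matrix.mulVec A x i from rfl] at this
        exact absurd this (ne_of_gt hi)
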